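/- For every a ∈ ℤ and every pair of indices (i,j), the set M_ij(a) of matrices in GL(2,ℤ) whose (i,j)-entry equals a is a rational subset of GL(2,ℤ). -/

import Mathlib

open Pointwise
/-- The rational subsets of a monoid `M`: the smallest family of subsets
containing all finite subsets and closed under union, product, and Kleene star
(the submonoid generated by a set). -/
inductive IsRat {M : Type*} [Monoid M] : Set M → Prop
  | finite (S : Set M) : S.Finite → IsRat S
  | union {S T : Set M} : IsRat S → IsRat T → IsRat (S ∪ T)
  | mul {S T : Set M} : IsRat S → IsRat T → IsRat (S * T)
  | star {S : Set M} : IsRat S → IsRat (Submonoid.closure S : Set M)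

abbrev GL2 := GL (Fin 2) ℤ

def LL (m : ℤ) : GL2 :=
  ⟨!![1,0;m,1], !![1,0;-m,1],
    by ext i j; fin_cases i <;> fin_cases j <;> simp [Matrix.mul_apply, Fin.sum_univ_two],
    by ext i j; fin_cases i <;> fin_cases j <;> simp [Matrix.mul_apply, Fin.sum_univ_two]⟩

def UU (n : ℤ) : GL2 :=
  ⟨!![1,n;0,1], !![1,-n;0,1],
    by ext i j; fin_cases i <;> fin_cases j <;> simp [Matrix.mul_apply, Fin.sum_univ_two],
    by ext i j; fin_cases i <;> fin_cases j <;> simp [Matrix.mul_apply, Fin.sum_univ_two]⟩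

def W : GL2 :=
  ⟨!![0,1;1,0], !![0,1;1,0],
    by ext i j; fin_cases i <;> fin_cases j <;> simp [Matrix.mul_apply, Fin.sum_univ_two],
    by ext i j; fin_cases i <;> fin_cases j <;> simp [Matrix.mul_apply, Fin.sum_univ_two]⟩

lemma LL_mul (m n : ℤ) : LL m * LL n = LL (m + n) := by
  apply Units.ext
  show (LL m).val * (LL n).val = _
  ext i j; fin_cases i <;> fin_cases j <;> simp [LL, Matrix.mul_apply, Fin.sum_univ_two] <;> ring

lemma UU_mul (m n : ℤ) : UU m * UU n = UU (m + n) := by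
  apply Units.ext
  show (UU m).val * (UU n).val = _
  ext i j; fin_cases i <;> fin_cases j <;> simp [UU, Matrix.mul_apply, Fin.sum_univ_two] <;> ring

lemma LL_zero : LL 0 = 1 := by
  apply Units.ext; ext i j; fin_cases i <;> fin_cases j <;> simp [LL]

lemma UU_zero : UU 0 = 1 := by
  apply Units.ext; ext i j; fin_cases i <;> fin_cases j <;> simp [UU]

lemma WW : W * W = 1 := by
  apply Units.ext
  show (W).val * (W).val = _
  ext i j; fin_cases i <;> fin_cases j <;> simp [W, Matrix.mul_apply, Fin.sum_univ_two]

lemma LL_mem (m : ℤ) : LL m ∈ Submonoid.closure ({LL 1, LL (-1)} : Set GL2) := by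
  induction m using Int.induction_on with
  | zero => rw [LL_zero]; exact one_mem _
  | succ k ih =>
      have := mul_mem ih (Submonoid.subset_closure (by simp : LL 1 ∈ ({LL 1, LL (-1)} : Set GL2)))
      rwa [LL_mul] at this
  | pred k ih =>
      have := mul_mem ih (Submonoid.subset_closure (by simp : LL (-1) ∈ ({LL 1, LL (-1)} : Set GL2)))
      have e : (-(k:ℤ) + -1) = -(k:ℤ) - 1 := by ring
      rwa [LL_mul, e] at this

lemma UU_mem (m : ℤ) : UU m ∈ Submonoid.closure ({UU 1, UU (-1)} : Set GL2) := by
  induction m using Int.induction_on with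
  | zero => rw [UU_zero]; exact one_mem _
  | succ k ih =>
      have := mul_mem ih (Submonoid.subset_closure (by simp : UU 1 ∈ ({UU 1, UU (-1)} : Set GL2)))
      rwa [UU_mul] at this
  | pred k ih =>
      have := mul_mem ih (Submonoid.subset_closure (by simp : UU (-1) ∈ ({UU 1, UU (-1)} : Set GL2)))
      have e : (-(k:ℤ) + -1) = -(k:ℤ) - 1 := by ring
      rwa [UU_mul, e] at this

lemma closureL_entries {l : GL2} (hl : l ∈ Submonoid.closure ({LL 1, LL (-1)} : Set GL2)) :
    l.val 0 0 = 1 ∧ l.val 0 1 = 0 := by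
  induction hl using Submonoid.closure_induction with
  | mem x hx => rcases hx with rfl | rfl <;> constructor <;> simp [LL]
  | one => constructor <;> simp
  | mul x y _ _ hx hy =>
      constructor <;>
      · show ((x : GL2).val * (y : GL2).val) _ _ = _
        rw [Matrix.mul_apply, Fin.sum_univ_two, hx.1, hx.2]
        simp [hy.1, hy.2]

lemma closureU_entries {u : GL2} (hu : u ∈ Submonoid.closure ({UU 1, UU (-1)} : Set GL2)) :
    u.val 0 0 = 1 ∧ u.val 1 0 = 0 := by
  induction hu using Submonoid.closure_induction with
  | mem x hx => rcases hx with rfl | rfl <;> constructor <;> simp [UU]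
  | one => constructor <;> simp
  | mul x y _ _ hx hy =>
      constructor <;>
      · show ((x : GL2).val * (y : GL2).val) _ _ = _
        rw [Matrix.mul_apply, Fin.sum_univ_two, hy.1, hy.2]
        simp [hx.1, hx.2]

lemma detpm (g : GL2) : g.val.det = 1 ∨ g.val.det = -1 := by
  have h : g.val.det * g.inv.det = 1 := by
    rw [← Matrix.det_mul, g.val_inv, Matrix.det_one]
  exact Int.isUnit_iff.mp (IsUnit.of_mul_eq_one _ h)

lemma entry00 {l u : GL2} (g : GL2)
    (hl : l ∈ Submonoid.closure ({LL 1, LL (-1)} : Set GL2))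
    (hu : u ∈ Submonoid.closure ({UU 1, UU (-1)} : Set GL2)) :
    (l * g * u).val 0 0 = g.val 0 0 := by
  obtain ⟨hl1, hl2⟩ := closureL_entries hl
  obtain ⟨hu1, hu2⟩ := closureU_entries hu
  show (l.val * g.val * u.val) 0 0 = _
  rw [Matrix.mul_apply, Fin.sum_univ_two, Matrix.mul_apply, Fin.sum_univ_two,
    Matrix.mul_apply, Fin.sum_univ_two, hl1, hl2, hu1, hu2]
  ring

lemma conj00 (m n : ℤ) (g : GL2) : (LL m * g * UU n).val 0 0 = g.val 0 0 := by
  show ((LL m).val * g.val * (UU n).val) 0 0 = _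
  rw [Matrix.mul_apply, Fin.sum_univ_two, Matrix.mul_apply, Fin.sum_univ_two,
    Matrix.mul_apply, Fin.sum_univ_two]
  simp [LL, UU]

lemma conj01 (m n : ℤ) (g : GL2) :
    (LL m * g * UU n).val 0 1 = g.val 0 1 + g.val 0 0 * n := by
  show ((LL m).val * g.val * (UU n).val) 0 1 = _
  rw [Matrix.mul_apply, Fin.sum_univ_two, Matrix.mul_apply, Fin.sum_univ_two,
    Matrix.mul_apply, Fin.sum_univ_two]
  simp [LL, UU]; ring

lemma conj10 (m n : ℤ) (g : GL2) :
    (LL m * g * UU n).val 1 0 = g.val 1 0 + m * g.val 0 0 := by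
  show ((LL m).val * g.val * (UU n).val) 1 0 = _
  rw [Matrix.mul_apply, Fin.sum_univ_two, Matrix.mul_apply, Fin.sum_univ_two,
    Matrix.mul_apply, Fin.sum_univ_two]
  simp [LL, UU]; ring

lemma unconj (m n : ℤ) (g : GL2) : LL (-m) * (LL m * g * UU n * UU (-n)) = g := by
  have h1 : UU n * UU (-n) = 1 := by rw [UU_mul]; simp [UU_zero]
  have h2 : LL (-m) * LL m = 1 := by rw [LL_mul]; simp [LL_zero]
  rw [mul_assoc (LL m * g), h1, mul_one, ← mul_assoc, h2, one_mul]

lemma ratS00pos (a : ℤ) (ha : 0 < a) : IsRat {g : GL2 | g.val 0 0 = a} := by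
  set Fa : Set GL2 := {g : GL2 | g.val 0 0 = a ∧ 0 ≤ g.val 0 1 ∧ g.val 0 1 < a
    ∧ 0 ≤ g.val 1 0 ∧ g.val 1 0 < a} with hFa
  have hfin : Fa.Finite := by
    apply Set.Finite.of_finite_image (f := fun g => (g.val 0 1, g.val 1 0, g.val 1 1))
    · apply Set.Finite.subset
        (Set.Finite.prod (Set.finite_Ico 0 a)
          (Set.Finite.prod (Set.finite_Ico 0 a) (Set.finite_Icc (-(a*a+1)) (a*a+1))))
      rintro y ⟨g, ⟨h0, h1, h2, h3, h4⟩, rfl⟩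
      have hdet := detpm g
      rw [Matrix.det_fin_two, h0] at hdet
      refine ⟨⟨h1, h2⟩, ⟨h3, h4⟩, ?_, ?_⟩ <;> rcases hdet with h | h <;> nlinarith
    · rintro g ⟨h0, _⟩ g' ⟨h0', _⟩ heq
      simp only [Prod.mk.injEq] at heq
      apply Units.ext
      ext i j; fin_cases i <;> fin_cases j
      · exact h0.trans h0'.symm
      · exact heq.1
      · exact heq.2.1
      · exact heq.2.2
  have key : {g : GL2 | g.val 0 0 = a} =
      (Submonoid.closure ({LL 1, LL (-1)} : Set GL2) : Set GL2) *
        (Fa * (Submonoid.closure ({UU 1, UU (-1)} : Set GL2) : Set GL2)) := by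
    ext g
    constructor
    · intro hg
      simp only [Set.mem_setOf_eq] at hg
      set m : ℤ := -(g.val 1 0 / a) with hm
      set n : ℤ := -(g.val 0 1 / a) with hn
      have hfmem : (LL m * g * UU n) ∈ Fa := by
        have e01 : g.val 0 1 + g.val 0 0 * n = g.val 0 1 % a := by
          rw [hn, hg, Int.emod_def]; ring
        have e10 : g.val 1 0 + m * g.val 0 0 = g.val 1 0 % a := by
          rw [hm, hg, Int.emod_def]; ring
        refine ⟨?_, ?_, ?_, ?_, ?_⟩
        · rw [conj00]; exact hg
        · rw [conj01, e01]; exact Int.emod_nonneg _ (ne_of_gt ha)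
        · rw [conj01, e01]; exact Int.emod_lt_of_pos _ ha
        · rw [conj10, e10]; exact Int.emod_nonneg _ (ne_of_gt ha)
        · rw [conj10, e10]; exact Int.emod_lt_of_pos _ ha
      rw [← unconj m n g]
      exact Set.mul_mem_mul (LL_mem (-m)) (Set.mul_mem_mul hfmem (UU_mem (-n)))
    · rintro ⟨l, hl, x, ⟨f, hf, u, hu, rfl⟩, rfl⟩
      show (l * (f * u)).val 0 0 = a
      have := entry00 f hl hu
      rw [mul_assoc] at this
      rw [this]; exact hf.1
  rw [key]
  exact .mul (.star (.finite _ (Set.toFinite _)))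
    (.mul (.finite _ hfin) (.star (.finite _ (Set.toFinite _))))

lemma conj11 (m n : ℤ) (g : GL2) :
    (LL m * g * UU n).val 1 1 =
      (g.val 1 0 + m * g.val 0 0) * n + (g.val 1 1 + m * g.val 0 1) := by
  show ((LL m).val * g.val * (UU n).val) 1 1 = _
  rw [Matrix.mul_apply, Fin.sum_univ_two, Matrix.mul_apply, Fin.sum_univ_two,
    Matrix.mul_apply, Fin.sum_univ_two]
  simp [LL, UU]; ring

lemma ratS000 : IsRat {g : GL2 | g.val 0 0 = 0} := by
  set F0 : Set GL2 := {g : GL2 | g.val 0 0 = 0 ∧ g.val 1 1 = 0} with hF0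
  have hunit : ∀ g : GL2, g.val 0 0 = 0 →
      (g.val 0 1 = 1 ∨ g.val 0 1 = -1) ∧ (g.val 1 0 = 1 ∨ g.val 1 0 = -1) := by
    intro g hg
    have hdet := detpm g
    rw [Matrix.det_fin_two, hg] at hdet
    have h1 : IsUnit (g.val 0 1 * g.val 1 0) := by
      rcases hdet with h | h
      · have e : g.val 0 1 * g.val 1 0 = -1 := by linarith
        rw [e]; exact IsUnit.neg isUnit_one
      · have e : g.val 0 1 * g.val 1 0 = 1 := by linarith
        rw [e]; exact isUnit_one
    constructor
    · exact Int.isUnit_iff.mp (isUnit_of_mul_isUnit_left h1)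
    · exact Int.isUnit_iff.mp (isUnit_of_mul_isUnit_right h1)
  have hfin : F0.Finite := by
    apply Set.Finite.of_finite_image (f := fun g => (g.val 0 1, g.val 1 0))
    · apply Set.Finite.subset (Set.toFinite (({1,-1} : Set ℤ) ×ˢ ({1,-1} : Set ℤ)))
      rintro y ⟨g, ⟨h0, h1⟩, rfl⟩
      obtain ⟨hb, hc⟩ := hunit g h0
      exact ⟨hb, hc⟩
    · rintro g ⟨h0, h3⟩ g' ⟨h0', h3'⟩ heq
      simp only [Prod.mk.injEq] at heq
      apply Units.ext
      ext i j; fin_cases i <;> fin_cases j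
      · exact h0.trans h0'.symm
      · exact heq.1
      · exact heq.2
      · exact h3.trans h3'.symm
  have key : {g : GL2 | g.val 0 0 = 0} =
      (Submonoid.closure ({LL 1, LL (-1)} : Set GL2) : Set GL2) *
        (F0 * (Submonoid.closure ({UU 1, UU (-1)} : Set GL2) : Set GL2)) := by
    ext g
    constructor
    · intro hg
      simp only [Set.mem_setOf_eq] at hg
      obtain ⟨n, hn⟩ : ∃ n : ℤ, n = -(g.val 1 1 * g.val 1 0) := ⟨_, rfl⟩
      have hfmem : (LL 0 * g * UU n) ∈ F0 := by
        have hc := (hunit g hg).2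
        constructor
        · rw [conj00]; exact hg
        · rw [conj11, hn]
          rcases hc with h | h <;> rw [h] <;> ring
      rw [← unconj 0 n g, neg_zero]
      exact Set.mul_mem_mul (LL_mem 0) (Set.mul_mem_mul hfmem (UU_mem (-n)))
    · rintro ⟨l, hl, x, ⟨f, hf, u, hu, rfl⟩, rfl⟩
      show (l * (f * u)).val 0 0 = 0
      have := entry00 f hl hu
      rw [mul_assoc] at this
      rw [this]; exact hf.1
  rw [key]
  exact .mul (.star (.finite _ (Set.toFinite _)))
    (.mul (.finite _ hfin) (.star (.finite _ (Set.toFinite _))))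

def NN : GL2 :=
  ⟨!![-1,0;0,-1], !![-1,0;0,-1],
    by ext i j; fin_cases i <;> fin_cases j <;> simp [Matrix.mul_apply, Fin.sum_univ_two],
    by ext i j; fin_cases i <;> fin_cases j <;> simp [Matrix.mul_apply, Fin.sum_univ_two]⟩

lemma NN_sq : NN * NN = 1 := by
  apply Units.ext
  show NN.val * NN.val = _
  ext i j; fin_cases i <;> fin_cases j <;> simp [NN, Matrix.mul_apply, Fin.sum_univ_two]

lemma mulN00 (g : GL2) : (g * NN).val 0 0 = -(g.val 0 0) := by
  show (g.val * NN.val) 0 0 = _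
  rw [Matrix.mul_apply, Fin.sum_univ_two]; simp [NN]

lemma ratS00 (a : ℤ) : IsRat {g : GL2 | g.val 0 0 = a} := by
  rcases lt_trichotomy a 0 with h | h | h
  · have key : {g : GL2 | g.val 0 0 = a} = {g : GL2 | g.val 0 0 = -a} * ({NN} : Set GL2) := by
      ext g
      constructor
      · intro hg
        refine ⟨g * NN, ?_, NN, rfl, ?_⟩
        · show (g * NN).val 0 0 = -a
          rw [mulN00, hg]
        · show (g * NN) * NN = g
          rw [mul_assoc, NN_sq, mul_one]
      · rintro ⟨s, hs, y, rfl, rfl⟩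
        show (s * NN).val 0 0 = a
        rw [mulN00, hs]; ring
    rw [key]
    exact .mul (ratS00pos (-a) (by linarith)) (.finite _ (Set.finite_singleton _))
  · subst h; exact ratS000
  · exact ratS00pos a h

lemma mulW00 (g : GL2) : (g * W).val 0 0 = g.val 0 1 := by
  show (g.val * W.val) 0 0 = _
  rw [Matrix.mul_apply, Fin.sum_univ_two]; simp [W]

lemma mulW01 (g : GL2) : (g * W).val 0 1 = g.val 0 0 := by
  show (g.val * W.val) 0 1 = _
  rw [Matrix.mul_apply, Fin.sum_univ_two]; simp [W]

lemma Wmul00 (g : GL2) : (W * g).val 0 0 = g.val 1 0 := by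
  show (W.val * g.val) 0 0 = _
  rw [Matrix.mul_apply, Fin.sum_univ_two]; simp [W]

lemma Wmul10 (g : GL2) : (W * g).val 1 0 = g.val 0 0 := by
  show (W.val * g.val) 1 0 = _
  rw [Matrix.mul_apply, Fin.sum_univ_two]; simp [W]

lemma Wmul01 (g : GL2) : (W * g).val 0 1 = g.val 1 1 := by
  show (W.val * g.val) 0 1 = _
  rw [Matrix.mul_apply, Fin.sum_univ_two]; simp [W]

lemma Wmul11 (g : GL2) : (W * g).val 1 1 = g.val 0 1 := by
  show (W.val * g.val) 1 1 = _
  rw [Matrix.mul_apply, Fin.sum_univ_two]; simp [W]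

/-- For every `a ∈ ℤ` and indices `i, j`, the set of matrices in `GL(2,ℤ)`
whose `(i,j)` entry equals `a` is a rational subset of `GL(2,ℤ)`. -/
theorem stmt17 (a : ℤ) (i j : Fin 2) :
    IsRat {g : GL (Fin 2) ℤ | (g : Matrix (Fin 2) (Fin 2) ℤ) i j = a} := by
  fin_cases i <;> fin_cases j
  · exact ratS00 a
  · -- (0,1)
    have key : {g : GL2 | g.val 0 1 = a} = {g : GL2 | g.val 0 0 = a} * ({W} : Set GL2) := by
      ext g
      constructor
      · intro hg
        refine ⟨g * W, ?_, W, rfl, ?_⟩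
        · show (g * W).val 0 0 = a
          rw [mulW00]; exact hg
        · show (g * W) * W = g
          rw [mul_assoc, WW, mul_one]
      · rintro ⟨s, hs, y, rfl, rfl⟩
        show (s * W).val 0 1 = a
        rw [mulW01]; exact hs
    show IsRat {g : GL2 | g.val 0 1 = a}
    rw [key]
    exact .mul (ratS00 a) (.finite _ (Set.finite_singleton _))
  · -- (1,0)
    have key : {g : GL2 | g.val 1 0 = a} = ({W} : Set GL2) * {g : GL2 | g.val 0 0 = a} := by
      ext g
      constructor
      · intro hg
        refine ⟨W, rfl, W * g, ?_, ?_⟩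
        · show (W * g).val 0 0 = a
          rw [Wmul00]; exact hg
        · show W * (W * g) = g
          rw [← mul_assoc, WW, one_mul]
      · rintro ⟨y, rfl, s, hs, rfl⟩
        show (W * s).val 1 0 = a
        rw [Wmul10]; exact hs
    show IsRat {g : GL2 | g.val 1 0 = a}
    rw [key]
    exact .mul (.finite _ (Set.finite_singleton _)) (ratS00 a)
  · -- (1,1)
    have key : {g : GL2 | g.val 1 1 = a} =
        ({W} : Set GL2) * ({g : GL2 | g.val 0 0 = a} * ({W} : Set GL2)) := by
      ext g
      constructor
      · intro hg
        refine ⟨W, rfl, W * g, ⟨(W * g) * W, ?_, W, rfl, ?_⟩, ?_⟩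
        · show ((W * g) * W).val 0 0 = a
          rw [mulW00, Wmul01]; exact hg
        · show ((W * g) * W) * W = W * g
          rw [mul_assoc, WW, mul_one]
        · show W * (W * g) = g
          rw [← mul_assoc, WW, one_mul]
      · rintro ⟨y, rfl, x, ⟨s, hs, z, rfl, rfl⟩, rfl⟩
        show (W * (s * W)).val 1 1 = a
        rw [Wmul11, mulW01]; exact hs
    show IsRat {g : GL2 | g.val 1 1 = a}
    rw [key]
    exact .mul (.finite _ (Set.finite_singleton _))
      (.mul (ratS00 a) (.finite _ (Set.finite_singleton _)))
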